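/- For every positive integer n and every pair i, j ∈ {0,1,2}, |r_{3,i}(n) − r_{3,j}(n)| ≤ 1, where r_{3,i}(n) is the number of partitions of n into distinct Fibonacci numbers whose number of parts is congruent to i modulo 3. -/

import Mathlib

/-- The Fibonacci numbers `f₁ = 1, f₂ = 2, fᵢ = fᵢ₋₁ + fᵢ₋₂` (value at `0` is junk). -/
def fibW : ℕ → ℕ
  | 0 => 0
  | 1 => 1
  | 2 => 2
  | (n + 3) => fibW (n + 2) + fibW (n + 1)

/-- `r d i n` is the number of partitions of `n` into distinct Fibonacci numbers
`f_j` (`j ≥ 1`) whose number of parts is `≡ i (mod d)`. -/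
noncomputable def r (d i n : ℕ) : ℕ :=
  Nat.card {S : Finset ℕ // (∀ j ∈ S, 1 ≤ j) ∧ (∑ j ∈ S, fibW j) = n ∧ S.card % d = i}

/-! ### Arithmetic in `ℤ[ω]`, represented as pairs `(a, b) = a + bω`. -/

/-- Multiplication by `ω`. -/
def wm (p : ℤ × ℤ) : ℤ × ℤ := (-p.2, p.1 - p.2)

lemma wm_zero : wm 0 = 0 := rfl

lemma wm_add (p q : ℤ × ℤ) : wm (p + q) = wm p + wm q := by
  simp only [wm, Prod.ext_iff, Prod.fst_add, Prod.snd_add]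
  constructor <;> ring

lemma wm_sum {α : Type*} (s : Finset α) (f : α → ℤ × ℤ) :
    wm (∑ i ∈ s, f i) = ∑ i ∈ s, wm (f i) := by
  induction s using Finset.cons_induction with
  | empty => simp [wm_zero]
  | cons a s ha ih => rw [Finset.sum_cons, Finset.sum_cons, wm_add, ih]

/-- `ω ^ k`. -/
def wpow (k : ℕ) : ℤ × ℤ :=
  if k % 3 = 0 then (1, 0) else if k % 3 = 1 then (0, 1) else (-1, -1)

lemma wpow_succ (k : ℕ) : wpow (k + 1) = wm (wpow k) := by
  rcases (by omega : k % 3 = 0 ∨ k % 3 = 1 ∨ k % 3 = 2) with h | h | h <;>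
    [ (have h' : (k+1) % 3 = 1 := by omega);
      (have h' : (k+1) % 3 = 2 := by omega);
      (have h' : (k+1) % 3 = 0 := by omega)] <;>
    simp [wpow, h, h', wm]

/-! ### Basic facts about `fibW`. -/

lemma fibW_ge : ∀ m, m ≤ fibW m := by
  intro m
  induction m using Nat.strong_induction_on with
  | _ m ih =>
    match m with
    | 0 => simp [fibW]
    | 1 => simp [fibW]
    | 2 => simp [fibW]
    | (k + 3) =>
      have h1 := ih (k + 2) (by omega)
      have h2 := ih (k + 1) (by omega)
      show k + 3 ≤ fibW (k + 2) + fibW (k + 1)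
      omega

lemma fibW_pos {m : ℕ} (h : 1 ≤ m) : 0 < fibW m := lt_of_lt_of_le h (fibW_ge m)

lemma fibW_lt_succ : ∀ k, 1 ≤ k → fibW k < fibW (k + 1)
  | 0, h => by omega
  | 1, _ => by decide
  | (k + 2), _ => by
      have := fibW_ge (k + 1)
      show fibW (k + 2) < fibW (k + 2) + fibW (k + 1)
      omega

lemma fibW_le_fibW : ∀ {i j : ℕ}, 1 ≤ i → i ≤ j → fibW i ≤ fibW j := by
  intro i j h1 h
  induction j with
  | zero => omega
  | succ k ih =>
    rcases Nat.eq_or_lt_of_le h with rfl | hlt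
    · exact le_refl _
    · exact (ih (by omega)).trans (fibW_lt_succ k (by omega)).le

lemma fibW_lt_fibW {i j : ℕ} (h1 : 1 ≤ i) (h : i < j) : fibW i < fibW j :=
  lt_of_lt_of_le (fibW_lt_succ i h1) (fibW_le_fibW (by omega) h)

lemma Icc_succ (k : ℕ) : Finset.Icc 1 (k + 1) = insert (k + 1) (Finset.Icc 1 k) := by
  ext a; simp only [Finset.mem_Icc, Finset.mem_insert]; omega

lemma sum_fibW : ∀ m : ℕ, (∑ j ∈ Finset.Icc 1 m, fibW j) + 2 = fibW (m + 2) := by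
  intro m
  induction m with
  | zero => decide
  | succ k ih =>
    rw [Icc_succ, Finset.sum_insert (by simp)]
    show fibW (k + 1) + _ + 2 = fibW (k + 2) + fibW (k + 1)
    omega

/-! ### The weighted representation counts `t m x = ∑ ω^{#S}` over subsets `S ⊆ [1, m]`
with `∑_{j ∈ S} f_j = x`. -/

def t (m x : ℕ) : ℤ × ℤ :=
  ∑ S ∈ (Finset.Icc 1 m).powerset.filter (fun S => (∑ j ∈ S, fibW j) = x), wpow S.card

lemma t_def (m x : ℕ) : t m x =
    ∑ S ∈ (Finset.Icc 1 m).powerset,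
      if (∑ j ∈ S, fibW j) = x then wpow S.card else 0 :=
  Finset.sum_filter _ _

lemma t_succ_aux (m x : ℕ) : t (m + 1) x = t m x +
    ∑ S ∈ (Finset.Icc 1 m).powerset,
      if fibW (m + 1) + (∑ j ∈ S, fibW j) = x then wm (wpow S.card) else 0 := by
  rw [t_def, Icc_succ, Finset.sum_powerset_insert (by simp), ← t_def]
  congr 1
  apply Finset.sum_congr rfl
  intro S hS
  have hmem : (m + 1) ∉ S := by
    intro h
    have := (Finset.mem_powerset.1 hS) h
    simp [Finset.mem_Icc] at this
  simp only [Finset.sum_insert hmem, Finset.card_insert_of_notMem hmem, wpow_succ]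

lemma t_succ_lt {m x : ℕ} (h : x < fibW (m + 1)) : t (m + 1) x = t m x := by
  rw [t_succ_aux, Finset.sum_eq_zero, add_zero]
  intro S _
  exact if_neg (by omega)

lemma t_succ_add (m y : ℕ) :
    t (m + 1) (y + fibW (m + 1)) = t m (y + fibW (m + 1)) + wm (t m y) := by
  rw [t_succ_aux]
  congr 1
  rw [t_def, wm_sum]
  apply Finset.sum_congr rfl
  intro S _
  by_cases h : (∑ j ∈ S, fibW j) = y
  · rw [if_pos (by omega), if_pos h]
  · rw [if_neg (by omega), if_neg h, wm_zero]

lemma t_vanish {m x : ℕ} (h : fibW (m + 2) < x + 2) : t m x = 0 := by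
  rw [t]
  apply Finset.sum_eq_zero
  intro S hS
  exfalso
  rw [Finset.mem_filter, Finset.mem_powerset] at hS
  have h1 : (∑ j ∈ S, fibW j) ≤ ∑ j ∈ Finset.Icc 1 m, fibW j :=
    Finset.sum_le_sum_of_subset hS.1
  have h2 := sum_fibW m
  omega

lemma t_top {m y : ℕ} (h : fibW (m + 2) < y + fibW (m + 1) + 2) :
    t (m + 1) (y + fibW (m + 1)) = wm (t m y) := by
  rw [t_succ_add, t_vanish h, zero_add]

/-- The (stabilized) weighted count of all Fibonacci partitions of `x`. -/
def s (x : ℕ) : ℤ × ℤ := t x x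

lemma t_stab_aux {m x : ℕ} (h : x < fibW (m + 1)) : ∀ k, t (m + k) x = t m x := by
  intro k
  induction k with
  | zero => rfl
  | succ k ih =>
    have : x < fibW (m + k + 1) :=
      lt_of_lt_of_le h (fibW_le_fibW (by omega) (by omega))
    rw [show m + (k + 1) = (m + k) + 1 from rfl, t_succ_lt this, ih]

lemma t_stab {m x : ℕ} (h : x < fibW (m + 1)) : t m x = s x := by
  have hx : x < fibW (x + 1) := lt_of_lt_of_le (by omega) (fibW_ge (x + 1))
  rcases le_total m x with hm | hm
  · obtain ⟨k, rfl⟩ := Nat.exists_eq_add_of_le hm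
    exact (t_stab_aux h k).symm
  · obtain ⟨k, rfl⟩ := Nat.exists_eq_add_of_le hm
    exact t_stab_aux hx k

/-! ### The top Zeckendorf index. -/

def Z (x : ℕ) : ℕ := Nat.findGreatest (fun z => fibW z ≤ x) x

lemma Z_zero : Z 0 = 0 := rfl

lemma Z_pos {x : ℕ} (h : 1 ≤ x) : 1 ≤ Z x :=
  Nat.le_findGreatest (P := fun z => fibW z ≤ x) h h

lemma fibW_Z_le {x : ℕ} (h : 1 ≤ x) : fibW (Z x) ≤ x :=
  Nat.findGreatest_spec (P := fun z => fibW z ≤ x) (m := 1) h h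

lemma Z_le (x : ℕ) : Z x ≤ x := Nat.findGreatest_le (P := fun z => fibW z ≤ x) x

lemma Z_lt_succ (x : ℕ) : x < fibW (Z x + 1) := by
  rcases Nat.eq_zero_or_pos x with rfl | hx
  · decide
  · by_cases h : Z x + 1 ≤ x
    · have h2 : Nat.findGreatest (fun z => fibW z ≤ x) x < Z x + 1 := Nat.lt_succ_self _
      have h3 : ¬ fibW (Z x + 1) ≤ x :=
        Nat.findGreatest_is_greatest (P := fun z => fibW z ≤ x) h2 h
      omega
    · have hle : Z x ≤ x := Z_le x
      have hzx : Z x = x := by omega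
      rw [hzx]
      exact lt_of_lt_of_le (by omega) (fibW_ge (x + 1))

lemma Z_le_of_lt {x m : ℕ} (h : x < fibW (m + 1)) : Z x ≤ m := by
  rcases Nat.eq_zero_or_pos x with rfl | hx
  · rw [Z_zero]; omega
  · by_contra hc
    have h1 : fibW (m + 1) ≤ fibW (Z x) := fibW_le_fibW (by omega) (by omega)
    have h2 := fibW_Z_le hx
    omega

lemma Z_ge {x k : ℕ} (h1 : fibW k ≤ x) (h2 : k ≤ x) : k ≤ Z x :=
  Nat.le_findGreatest h2 h1

/-! ### The auxiliary quantity `D` and the transfer recursion. -/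

def D (x : ℕ) : ℤ × ℤ := if x = 0 then 0 else t (Z x) (x + fibW (Z x))

def B : ℕ → ℤ × ℤ → ℤ × ℤ → ℤ × ℤ
  | 0, a, _ => wm a
  | 1, a, d => wm a + wm d
  | (j + 2), a, d => wm a + wm (B j a d)

lemma B_six (j : ℕ) (a d : ℤ × ℤ) : B (j + 6) a d = B j a d := by
  show wm a + wm (wm a + wm (wm a + wm (B j a d))) = B j a d
  simp only [wm_add]
  simp only [wm, Prod.ext_iff, Prod.fst_add, Prod.snd_add]
  constructor <;> ring

lemma B_mod (j : ℕ) (a d : ℤ × ℤ) : B j a d = B (j % 6) a d := by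
  conv_lhs => rw [← Nat.div_add_mod j 6]
  generalize j / 6 = k
  induction k with
  | zero => simp
  | succ n ih =>
    rw [show 6 * (n + 1) + j % 6 = (6 * n + j % 6) + 6 by ring, B_six, ih]

lemma Q_beta (x : ℕ) : ∀ j, t (Z x + 1 + j) (x + fibW (Z x + 1 + j)) = B j (s x) (D x) := by
  have hxlt : x < fibW (Z x + 1) := Z_lt_succ x
  intro j
  induction j using Nat.twoStepInduction with
  | zero =>
    show t (Z x + 1) (x + fibW (Z x + 1)) = wm (s x)
    rw [t_top ?_, t_stab hxlt]
    rcases Nat.eq_zero_or_pos x with rfl | hx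
    · decide
    · obtain ⟨w, hw⟩ : ∃ w, Z x = w + 1 := ⟨Z x - 1, by have := Z_pos hx; omega⟩
      have hfz : fibW (Z x) ≤ x := fibW_Z_le hx
      rw [hw] at hfz ⊢
      have e1 : fibW (w + 1 + 2) = fibW (w + 1 + 1) + fibW (w + 1) := rfl
      omega
  | one =>
    rcases Nat.eq_zero_or_pos x with rfl | hx
    · decide
    · obtain ⟨w, hw⟩ : ∃ w, Z x = w + 1 := ⟨Z x - 1, by have := Z_pos hx; omega⟩
      have hxw : x < fibW (w + 2) := by rw [hw] at hxlt; exact hxlt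
      show t (Z x + 2) (x + fibW (Z x + 2)) = wm (s x) + wm (D x)
      rw [hw]
      have e1 : t (w + 3) (x + fibW (w + 3)) =
          t (w + 2) (x + fibW (w + 3)) + wm (t (w + 2) x) := t_succ_add (w + 2) x
      have e2 : t (w + 2) x = s x :=
        t_stab (lt_of_lt_of_le hxw (fibW_le_fibW (by omega) (by omega)))
      have hr : fibW (w + 3) = fibW (w + 2) + fibW (w + 1) := rfl
      have ha1 : fibW (w + 1 + 2) = fibW (w + 2) + fibW (w + 1) := rfl
      have ha2 : fibW (w + 1 + 1) = fibW (w + 2) := rfl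
      have e3 : t (w + 2) (x + fibW (w + 3)) = wm (t (w + 1) (x + fibW (w + 1))) := by
        rw [show x + fibW (w + 3) = (x + fibW (w + 1)) + fibW (w + 2) by omega]
        exact t_top (by omega)
      have e4 : t (w + 1) (x + fibW (w + 1)) = D x := by
        rw [D, if_neg (by omega), hw]
      rw [show w + 1 + 2 = w + 3 from rfl, e1, e2, e3, e4]
      exact add_comm _ _
  | more j ih _ =>
    have hk : Z x + 1 + j = (Z x + j) + 1 := by omega
    rw [hk] at ih
    set w : ℕ := Z x + j with hwdef
    have hgoal : Z x + 1 + (j + 2) = w + 3 := by omega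
    rw [hgoal]
    show t (w + 3) (x + fibW (w + 3)) = wm (s x) + wm (B j (s x) (D x))
    have e1 : t (w + 3) (x + fibW (w + 3)) =
        t (w + 2) (x + fibW (w + 3)) + wm (t (w + 2) x) := t_succ_add (w + 2) x
    have e2 : t (w + 2) x = s x :=
      t_stab (lt_of_lt_of_le hxlt (fibW_le_fibW (by omega) (by omega)))
    have hr : fibW (w + 3) = fibW (w + 2) + fibW (w + 1) := rfl
    have ha1 : fibW (w + 1 + 2) = fibW (w + 2) + fibW (w + 1) := rfl
    have ha2 : fibW (w + 1 + 1) = fibW (w + 2) := rfl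
    have e3 : t (w + 2) (x + fibW (w + 3)) = wm (t (w + 1) (x + fibW (w + 1))) := by
      rw [show x + fibW (w + 3) = (x + fibW (w + 1)) + fibW (w + 2) by omega]
      exact t_top (by omega)
    rw [e1, e2, e3, ih]
    exact add_comm _ _

/-! ### The invariant set. -/

def TT : List ((ℤ × ℤ) × (ℤ × ℤ)) :=
  [((-1, -1), (0, 0)), ((-1, -1), (1, 0)), ((-1, -1), (1, 1)),
   ((-1, 0), (0, -1)), ((-1, 0), (0, 0)), ((-1, 0), (1, 0)),
   ((0, -1), (0, 0)), ((0, -1), (0, 1)), ((0, -1), (1, 1)),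
   ((0, 0), (-1, -1)), ((0, 0), (-1, 0)), ((0, 0), (0, -1)),
   ((0, 0), (0, 0)), ((0, 0), (0, 1)), ((0, 0), (1, 0)), ((0, 0), (1, 1)),
   ((0, 1), (-1, -1)), ((0, 1), (0, -1)), ((0, 1), (0, 0)),
   ((1, 0), (-1, 0)), ((1, 0), (0, 0)), ((1, 0), (0, 1)),
   ((1, 1), (-1, -1)), ((1, 1), (-1, 0)), ((1, 1), (0, 0))]

lemma TT_closed : ∀ p ∈ TT, ∀ q ∈ [p.2, B 0 p.1 p.2, B 1 p.1 p.2, B 2 p.1 p.2,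
    B 3 p.1 p.2, B 4 p.1 p.2, B 5 p.1 p.2],
    (wm q + wm p.1, wm (wm q)) ∈ TT := by decide

lemma TT_bounds : ∀ p ∈ TT, -1 ≤ p.1.1 ∧ p.1.1 ≤ 1 ∧ -1 ≤ p.1.2 ∧ p.1.2 ≤ 1 ∧
    -1 ≤ p.1.1 - p.1.2 ∧ p.1.1 - p.1.2 ≤ 1 := by decide

/-! ### The main invariant. -/

lemma main_mem : ∀ x : ℕ, (s x, D x) ∈ TT := by
  intro x
  induction x using Nat.strong_induction_on with
  | _ x ih =>
    rcases lt_or_ge x 3 with hx3 | hx3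
    · interval_cases x <;> decide
    · have hz3 : 3 ≤ Z x := Z_ge (by show fibW 3 ≤ x; show 3 ≤ x; omega) (by omega)
      obtain ⟨w, hw⟩ : ∃ w, Z x = w + 3 := ⟨Z x - 3, by omega⟩
      have hfx : fibW (Z x) ≤ x := fibW_Z_le (by omega)
      have hxz : x < fibW (Z x + 1) := Z_lt_succ x
      rw [hw] at hfx hxz
      obtain ⟨y, hxy⟩ : ∃ y, x = y + fibW (w + 3) := ⟨x - fibW (w + 3), by omega⟩
      have hr4 : fibW (w + 4) = fibW (w + 3) + fibW (w + 2) := rfl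
      have hr3 : fibW (w + 3) = fibW (w + 2) + fibW (w + 1) := rfl
      have ha1 : fibW (w + 1 + 2) = fibW (w + 2) + fibW (w + 1) := rfl
      have ha2 : fibW (w + 1 + 1) = fibW (w + 2) := rfl
      have ha3 : fibW (w + 2 + 2) = fibW (w + 3) + fibW (w + 2) := rfl
      have ha4 : fibW (w + 2 + 1) = fibW (w + 3) := rfl
      have ha5 : fibW (w + 3 + 1) = fibW (w + 3) + fibW (w + 2) := rfl
      have ha6 : fibW (w + 2 + 1) = fibW (w + 2) + fibW (w + 1) := rfl
      have hylt : y < fibW (w + 2) := by omega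
      have hyx : y < x := by have := fibW_pos (m := w + 3) (by omega); omega
      set q : ℤ × ℤ := t (w + 1) (y + fibW (w + 1)) with hq
      have e_common : t (w + 2) (y + fibW (w + 3)) = wm q := by
        rw [show y + fibW (w + 3) = (y + fibW (w + 1)) + fibW (w + 2) by omega]
        exact t_top (by omega)
      have hsy : t (w + 2) y = s y :=
        t_stab (lt_of_lt_of_le hylt (fibW_le_fibW (by omega) (by omega)))
      have hsx : s x = wm q + wm (s y) := by
        have h1 : t (w + 3) x = s x := t_stab (by omega)
        rw [← h1, hxy, t_succ_add (w + 2) y, e_common, hsy]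
      have hDx : D x = wm (wm q) := by
        rw [D, if_neg (by omega), hw]
        have h2 : t (w + 3) (x + fibW (w + 3)) = wm (t (w + 2) x) :=
          t_top (by have := fibW_lt_fibW (i := w + 2) (j := w + 3) (by omega) (by omega); omega)
        rw [h2, hxy, e_common]
      have hq_in : q ∈ [D y, B 0 (s y) (D y), B 1 (s y) (D y), B 2 (s y) (D y),
          B 3 (s y) (D y), B 4 (s y) (D y), B 5 (s y) (D y)] := by
        have hZy : Z y ≤ w + 1 := Z_le_of_lt hylt
        rcases Nat.eq_or_lt_of_le hZy with heq | hlt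
        · have hy0 : y ≠ 0 := by
            intro h0; rw [h0, Z_zero] at heq; omega
          have hqd : q = D y := by rw [D, if_neg hy0, heq]
          simp [hqd]
        · have hj : Z y + 1 + (w - Z y) = w + 1 := by omega
          have hQ := Q_beta y (w - Z y)
          rw [hj] at hQ
          have hqB : q = B ((w - Z y) % 6) (s y) (D y) := by rw [hq, hQ, B_mod]
          have h6 : (w - Z y) % 6 < 6 := Nat.mod_lt _ (by omega)
          rcases (by omega : (w - Z y) % 6 = 0 ∨ (w - Z y) % 6 = 1 ∨ (w - Z y) % 6 = 2 ∨
              (w - Z y) % 6 = 3 ∨ (w - Z y) % 6 = 4 ∨ (w - Z y) % 6 = 5) with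
            h | h | h | h | h | h <;> rw [h] at hqB <;> rw [hqB] <;> simp
      have := TT_closed (s y, D y) (ih y hyx) q hq_in
      rw [show ((s x, D x) : (ℤ × ℤ) × (ℤ × ℤ)) = (wm q + wm (s y), wm (wm q)) by
        rw [hsx, hDx]]
      exact this

/-! ### Relating `r` to `t`. -/

lemma r_eq_card (i n : ℕ) : r 3 i n =
    (((Finset.Icc 1 n).powerset.filter (fun S => (∑ j ∈ S, fibW j) = n)).filter
      (fun S => S.card % 3 = i)).card := by
  rw [r, ← Nat.card_eq_finsetCard]
  apply Nat.card_congr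
  apply Equiv.subtypeEquivRight
  intro S
  simp only [Finset.mem_filter, Finset.mem_powerset]
  constructor
  · rintro ⟨h1, h2, h3⟩
    refine ⟨⟨fun j hj => Finset.mem_Icc.2 ⟨h1 j hj, ?_⟩, h2⟩, h3⟩
    have hle : fibW j ≤ ∑ k ∈ S, fibW k :=
      Finset.single_le_sum (fun k _ => Nat.zero_le _) hj
    have := fibW_ge j
    omega
  · rintro ⟨⟨h1, h2⟩, h3⟩
    exact ⟨fun j hj => (Finset.mem_Icc.1 (h1 hj)).1, h2, h3⟩

lemma sum_wpow (A : Finset (Finset ℕ)) :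
    ∑ S ∈ A, wpow S.card =
      (((A.filter fun S => S.card % 3 = 0).card : ℤ) -
        ((A.filter fun S => S.card % 3 = 2).card : ℤ),
       ((A.filter fun S => S.card % 3 = 1).card : ℤ) -
        ((A.filter fun S => S.card % 3 = 2).card : ℤ)) := by
  induction A using Finset.cons_induction with
  | empty => simp; rfl
  | cons a A ha ih =>
    rw [Finset.sum_cons, ih]
    rcases (by omega : a.card % 3 = 0 ∨ a.card % 3 = 1 ∨ a.card % 3 = 2) with h | h | h
    · rw [Finset.filter_cons_of_pos _ _ _ ha (by simp [h]),
          Finset.filter_cons_of_neg _ _ _ ha (by simp [h]),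
          Finset.filter_cons_of_neg _ _ _ ha (by simp [h]), Finset.card_cons]
      rw [show wpow a.card = (1, 0) by simp [wpow, h], Prod.mk_add_mk, Prod.mk.injEq]
      exact ⟨by push_cast; ring, by push_cast; ring⟩
    · rw [Finset.filter_cons_of_neg _ _ _ ha (by simp [h]),
          Finset.filter_cons_of_neg _ _ _ ha (by simp [h]),
          Finset.filter_cons_of_pos _ _ _ ha (by simp [h]), Finset.card_cons]
      rw [show wpow a.card = (0, 1) by simp [wpow, h], Prod.mk_add_mk, Prod.mk.injEq]
      exact ⟨by push_cast; ring, by push_cast; ring⟩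
    · rw [Finset.filter_cons_of_neg _ _ _ ha (by simp [h]),
          Finset.filter_cons_of_pos _ _ _ ha (by simp [h]),
          Finset.filter_cons_of_neg _ _ _ ha (by simp [h]), Finset.card_cons]
      rw [show wpow a.card = (-1, -1) by simp [wpow, h], Prod.mk_add_mk, Prod.mk.injEq]
      exact ⟨by push_cast; ring, by push_cast; ring⟩

lemma s_eq (n : ℕ) : s n =
    (((r 3 0 n : ℤ) - (r 3 2 n : ℤ)), ((r 3 1 n : ℤ) - (r 3 2 n : ℤ))) := by
  rw [r_eq_card, r_eq_card, r_eq_card]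
  show t n n = _
  rw [t, sum_wpow]

theorem shallit_bound (n : ℕ) (hn : 0 < n) (i j : ℕ) (hi : i < 3) (hj : j < 3) :
    |(r 3 i n : ℤ) - (r 3 j n : ℤ)| ≤ 1 := by
  have hmem := main_mem n
  rw [s_eq n] at hmem
  have hb := TT_bounds _ hmem
  simp only at hb
  obtain ⟨h1, h2, h3, h4, h5, h6⟩ := hb
  interval_cases i <;> interval_cases j <;> (rw [abs_le]; constructor <;> omega)
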